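/- Let S be a finite set with m = |S|, N ≥ 0, and let (≤₁, τ) be a pruned 2-tree on S with σ ∈ D(τ, N). Define Φ_σ(τ) ⊆ Conf(S) as the union of the Fox–Neuwirth cells FN_{(≤₂,τ̃)} over all pruned 2-trees (≤₂, τ̃) on S with σ ∈ D(τ̃, N) that admit a morphism from (≤₁, τ) inducing the identity on S. Then Φ_σ(τ) is contractible. -/

import Mathlib

/-- The configuration space `Conf S`: the set of injective maps (configurations)
`p : S → ℝ × ℝ`, as a subset of the product space `S → ℝ × ℝ`. -/
def Conf (S : Type*) : Set (S → ℝ × ℝ) := {p | Function.Injective p}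

/-- Condition (I) on a surjection `σ`: consecutive values are distinct. -/
def CondI {S : Type*} {k : ℕ} (σ : Fin k → S) : Prop :=
  ∀ i j : Fin k, (j : ℕ) = (i : ℕ) + 1 → σ i ≠ σ j

/-- Condition (II): no interleaving pattern `i₁ < j₁ < i₂ < j₂` with
`i₁, i₂ ∈ σ⁻¹(s)` and `j₁, j₂ ∈ σ⁻¹(s')` for `s ≠ s'`. -/
def CondII {S : Type*} {k : ℕ} (σ : Fin k → S) : Prop :=
  ¬ ∃ (s s' : S) (i₁ j₁ i₂ j₂ : Fin k),
      s ≠ s' ∧ i₁ < j₁ ∧ j₁ < i₂ ∧ i₂ < j₂ ∧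
      σ i₁ = s ∧ σ i₂ = s ∧ σ j₁ = s' ∧ σ j₂ = s'

/-- `σ ∈ D(S, N)`: a surjection `σ : {1, …, N + |S|} → S` satisfying (I) and (II).
(The condition `k = N + |S|` is imposed as a separate hypothesis in the theorems.) -/
def MemD {S : Type*} {k : ℕ} (σ : Fin k → S) : Prop :=
  Function.Surjective σ ∧ CondI σ ∧ CondII σ

/-- Condition (C1) on a configuration `p`: if some element of `σ⁻¹(s)` lies strictly
between two elements of `σ⁻¹(s')` (for `s ≠ s'`) then `x_s < x_{s'}`. -/
def CondC1 {S : Type*} {k : ℕ} (σ : Fin k → S) (p : S → ℝ × ℝ) : Prop :=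
  ∀ s s' : S, s ≠ s' →
    (∃ i j₁ j₂ : Fin k, σ i = s ∧ σ j₁ = s' ∧ σ j₂ = s' ∧ j₁ < i ∧ i < j₂) →
    (p s).1 < (p s').1

/-- Condition (C2) on a configuration `p`: if `x_s = x_{s'}` (for `s ≠ s'`) and every
element of `σ⁻¹(s)` is smaller than every element of `σ⁻¹(s')` then `y_s < y_{s'}`. -/
def CondC2 {S : Type*} {k : ℕ} (σ : Fin k → S) (p : S → ℝ × ℝ) : Prop :=
  ∀ s s' : S, s ≠ s' → (p s).1 = (p s').1 →
    (∀ i j : Fin k, σ i = s → σ j = s' → i < j) →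
    (p s).2 < (p s').2

/-- A pruned 2-tree on `S`: a linear order `r` (as a `≤`-relation) together with a
surjection `τ : S → Fin n` which is monotone with respect to `r`. -/
def IsPruned2Tree {S : Type*} {n : ℕ} (r : S → S → Prop) (τ : S → Fin n) : Prop :=
  IsLinearOrder S r ∧ Function.Surjective τ ∧ ∀ s s', r s s' → τ s ≤ τ s'

/-- The Fox–Neuwirth cell of a 2-tree `(r, τ)`: configurations `p` such that
(i) `τ s < τ s'` implies `x_s < x_{s'}`, and (ii) `τ s = τ s'` and `s <₁ s'`
imply `x_s = x_{s'}` and `y_s < y_{s'}`. -/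
def FNcell {S : Type*} {n : ℕ} (r : S → S → Prop) (τ : S → Fin n) :
    Set (S → ℝ × ℝ) :=
  {p | Function.Injective p ∧
    (∀ s s', τ s < τ s' → (p s).1 < (p s').1) ∧
    (∀ s s', τ s = τ s' → r s s' → s ≠ s' →
      (p s).1 = (p s').1 ∧ (p s).2 < (p s').2)}

/-- `σ ∈ D(τ, N)`: the additional conditions (B) and (C) relative to the 2-tree
`(r, τ)` (conditions (I), (II) and surjectivity, i.e. `σ ∈ D(S, N)`, are imposed
separately). -/
def MemDtree {S : Type*} {n k : ℕ} (r : S → S → Prop) (τ : S → Fin n)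
    (σ : Fin k → S) : Prop :=
  (∀ s s' : S, s ≠ s' →
      (∃ i j₁ j₂ : Fin k, σ i = s ∧ σ j₁ = s' ∧ σ j₂ = s' ∧ j₁ < i ∧ i < j₂) →
      τ s < τ s') ∧
  (∀ s s' : S, τ s = τ s' → r s s' → s ≠ s' →
      ∀ i j : Fin k, σ i = s → σ j = s' → i < j)

/-- A morphism of pruned 2-trees on `S` from `(r, τ)` to `(r', τ')` inducing the
identity on `S`: a monotone map `P : Fin n → Fin n'` with `τ' = P ∘ τ` such that
`τ s = τ s'` and `s <₁ s'` imply `s <₂ s'`. -/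
def TreeMorphism {S : Type*} {n n' : ℕ} (r : S → S → Prop) (τ : S → Fin n)
    (r' : S → S → Prop) (τ' : S → Fin n') : Prop :=
  ∃ P : Fin n → Fin n', Monotone P ∧ (∀ s, τ' s = P (τ s)) ∧
    ∀ s s' : S, τ s = τ s' → r s s' → s ≠ s' → r' s s'

/-- The space `Φ_σ(τ)`: the union of the Fox–Neuwirth cells `FN_{(r', τ')}` over all
pruned 2-trees `(r', τ')` on `S` with `σ ∈ D(τ', N)` admitting a morphism from
`(r, τ)` inducing the identity on `S`. -/
def Phi {S : Type*} {n k : ℕ} (r : S → S → Prop) (τ : S → Fin n)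
    (σ : Fin k → S) : Set (S → ℝ × ℝ) :=
  {p | ∃ (n' : ℕ) (r' : S → S → Prop) (τ' : S → Fin n'),
      IsPruned2Tree r' τ' ∧ MemDtree r' τ' σ ∧ TreeMorphism r τ r' τ' ∧
      p ∈ FNcell r' τ'}

section StatementSevenAux

/-- All of `σ⁻¹(s)` comes before all of `σ⁻¹(s')`. -/
def AllBefore {S : Type*} {k : ℕ} (σ : Fin k → S) (s s' : S) : Prop :=
  ∀ i j : Fin k, σ i = s → σ j = s' → i < j

/-- `σ⁻¹(s)` has an element strictly between two elements of `σ⁻¹(s')`. -/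
def Nested {S : Type*} {k : ℕ} (σ : Fin k → S) (s s' : S) : Prop :=
  ∃ i j₁ j₂ : Fin k, σ i = s ∧ σ j₁ = s' ∧ σ j₂ = s' ∧ j₁ < i ∧ i < j₂

lemma sigma_trichotomy {S : Type*} {k : ℕ} (σ : Fin k → S)
    (hs : Function.Surjective σ) (s s' : S) (h : s ≠ s') :
    AllBefore σ s s' ∨ AllBefore σ s' s ∨ Nested σ s s' ∨ Nested σ s' s := by
  classical
  have hA : (Finset.univ.filter (fun i => σ i = s)).Nonempty := by
    obtain ⟨i, hi⟩ := hs s; exact ⟨i, by simp [hi]⟩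
  have hB : (Finset.univ.filter (fun i => σ i = s')).Nonempty := by
    obtain ⟨i, hi⟩ := hs s'; exact ⟨i, by simp [hi]⟩
  set A := Finset.univ.filter (fun i => σ i = s) with hAdef
  set B := Finset.univ.filter (fun i => σ i = s') with hBdef
  have memA : ∀ i, σ i = s → i ∈ A := fun i hi => by simp [hAdef, hi]
  have memB : ∀ j, σ j = s' → j ∈ B := fun j hj => by simp [hBdef, hj]
  have valA : ∀ i ∈ A, σ i = s := fun i hi => by simpa [hAdef] using hi
  have valB : ∀ j ∈ B, σ j = s' := fun j hj => by simpa [hBdef] using hj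
  by_cases h1 : A.max' hA < B.min' hB
  · left
    intro i j hi hj
    exact lt_of_le_of_lt (Finset.le_max' A i (memA i hi))
      (lt_of_lt_of_le h1 (Finset.min'_le B j (memB j hj)))
  · by_cases h2 : B.max' hB < A.min' hA
    · right; left
      intro j i hj hi
      exact lt_of_le_of_lt (Finset.le_max' B j (memB j hj))
        (lt_of_lt_of_le h2 (Finset.min'_le A i (memA i hi)))
    · push_neg at h1 h2
      rcases lt_trichotomy (A.min' hA) (B.min' hB) with hlt | heq | hgt
      · right; right; right
        have hne : B.min' hB ≠ A.max' hA := by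
          intro he
          exact h (by rw [← valA _ (A.max'_mem hA), ← he]; exact valB _ (B.min'_mem hB))
        have hlt2 : B.min' hB < A.max' hA := lt_of_le_of_ne h1 hne
        exact ⟨B.min' hB, A.min' hA, A.max' hA, valB _ (B.min'_mem hB),
          valA _ (A.min'_mem hA), valA _ (A.max'_mem hA), hlt, hlt2⟩
      · exact absurd ((valA _ (A.min'_mem hA)).symm.trans (heq ▸ valB _ (B.min'_mem hB))) h
      · right; right; left
        have hne : A.min' hA ≠ B.max' hB := by
          intro he
          exact h ((valA _ (A.min'_mem hA)).symm.trans (he ▸ valB _ (B.max'_mem hB)))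
        exact ⟨A.min' hA, B.min' hB, B.max' hB, valA _ (A.min'_mem hA),
          valB _ (B.min'_mem hB), valB _ (B.max'_mem hB), hgt, lt_of_le_of_ne h2 hne⟩

lemma comb_le' {a b u v u' v' : ℝ} (ha : 0 ≤ a) (hb : 0 ≤ b)
    (h1 : u ≤ v) (h2 : u' ≤ v') : a * u + b * u' ≤ a * v + b * v' :=
  add_le_add (mul_le_mul_of_nonneg_left h1 ha) (mul_le_mul_of_nonneg_left h2 hb)

lemma comb_lt' {a b u v u' v' : ℝ} (ha : 0 ≤ a) (hb : 0 ≤ b) (hab : a + b = 1)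
    (h1 : a = 0 ∨ u < v) (h2 : b = 0 ∨ u' < v') : a * u + b * u' < a * v + b * v' := by
  rcases eq_or_lt_of_le ha with ha' | ha'
  · have hb' : b = 1 := by linarith
    rcases h2 with h | h
    · exfalso; rw [← ha', h] at hab; norm_num at hab
    · rw [← ha', hb']; simpa using h
  · have h1' : u < v := by
      rcases h1 with h | h
      · exact absurd h.symm (ne_of_lt ha')
      · exact h
    have hstep : a * u < a * v := mul_lt_mul_of_pos_left h1' ha'
    have h2' : b * u' ≤ b * v' := by
      rcases h2 with h | h
      · rw [h]; simp
      · exact mul_le_mul_of_nonneg_left h.le hb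
    linarith

lemma comb_zero' {a b u v : ℝ} (ha : 0 ≤ a) (hb : 0 ≤ b)
    (hu : u ≤ 0) (hv : v ≤ 0) (h : a * u + b * v = 0) : a * u = 0 ∧ b * v = 0 := by
  have h1 : a * u ≤ 0 := mul_nonpos_iff.2 (Or.inl ⟨ha, hu⟩)
  have h2 : b * v ≤ 0 := mul_nonpos_iff.2 (Or.inl ⟨hb, hv⟩)
  exact ⟨by linarith, by linarith⟩

/-- The explicit pairwise description of `Φ_σ(τ)`. -/
def Eset {S : Type*} {n k : ℕ} (r : S → S → Prop) (τ : S → Fin n)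
    (σ : Fin k → S) : Set (S → ℝ × ℝ) :=
  {p | Function.Injective p ∧
    (∀ s s', τ s < τ s' → (p s).1 ≤ (p s').1) ∧
    (∀ s s', τ s = τ s' → r s s' → s ≠ s' → (p s).1 = (p s').1 ∧ (p s).2 < (p s').2) ∧
    (∀ s s', s ≠ s' → Nested σ s s' → (p s).1 < (p s').1) ∧
    (∀ s s', s ≠ s' → (p s).1 = (p s').1 → AllBefore σ s s' → (p s).2 < (p s').2)}

end StatementSevenAux

section StatementSevenLemmas

variable {S : Type*} {n k : ℕ} {r : S → S → Prop} {τ : S → Fin n} {σ : Fin k → S}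

lemma Eset_xeq (hlin : IsLinearOrder S r) {p : S → ℝ × ℝ} (hp : p ∈ Eset r τ σ)
    {s s' : S} (h : τ s = τ s') : (p s).1 = (p s').1 := by
  by_cases hss : s = s'
  · rw [hss]
  · rcases hlin.total s s' with h' | h'
    · exact (hp.2.2.1 s s' h h' hss).1
    · exact ((hp.2.2.1 s' s h.symm h' (Ne.symm hss)).1).symm

lemma Eset_xle (hlin : IsLinearOrder S r) {p : S → ℝ × ℝ} (hp : p ∈ Eset r τ σ)
    {s s' : S} (h : τ s ≤ τ s') : (p s).1 ≤ (p s').1 := by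
  rcases h.lt_or_eq with h' | h'
  · exact hp.2.1 s s' h'
  · exact (Eset_xeq hlin hp h').le

lemma phi_subset_Eset (hσs : Function.Surjective σ) : Phi r τ σ ⊆ Eset r τ σ := by
  rintro p ⟨n', r', τ', ⟨hlin', hτ's, hτ'mono⟩, ⟨hB, hC⟩, ⟨P, hP, hPτ, hrr'⟩, hinj, hx, hxy⟩
  refine ⟨hinj, ?_, ?_, ?_, ?_⟩
  · intro s s' h
    have hne : s ≠ s' := fun he => absurd (he ▸ h) (lt_irrefl _)
    have h' : τ' s ≤ τ' s' := by rw [hPτ, hPτ]; exact hP h.le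
    rcases h'.lt_or_eq with h' | h'
    · exact (hx s s' h').le
    · rcases hlin'.total s s' with hr | hr
      · exact (hxy s s' h' hr hne).1.le
      · exact ((hxy s' s h'.symm hr hne.symm).1).ge
  · intro s s' hττ hr hne
    exact hxy s s' (by rw [hPτ, hPτ, hττ]) (hrr' s s' hττ hr hne) hne
  · intro s s' hne hnest
    exact hx s s' (hB s s' hne hnest)
  · intro s s' hne hxeq hAB
    have hττ' : τ' s = τ' s' := by
      rcases lt_trichotomy (τ' s) (τ' s') with h | h | h
      · exact absurd hxeq (ne_of_lt (hx _ _ h))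
      · exact h
      · exact absurd hxeq.symm (ne_of_lt (hx _ _ h))
    rcases hlin'.total s s' with hr | hr
    · exact (hxy s s' hττ' hr hne).2
    · exfalso
      obtain ⟨i, hi⟩ := hσs s
      obtain ⟨j, hj⟩ := hσs s'
      exact absurd (hAB i j hi hj) (not_lt.2 (hC s' s hττ'.symm hr hne.symm j i hj hi).le)

lemma Eset_subset_phi [Fintype S] (htree : IsPruned2Tree r τ)
    (hσs : Function.Surjective σ) : Eset r τ σ ⊆ Phi r τ σ := by
  classical
  rintro p hp
  obtain ⟨hinj, hi, hii, hiii, hiv⟩ := hp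
  have hp' : p ∈ Eset r τ σ := ⟨hinj, hi, hii, hiii, hiv⟩
  obtain ⟨hlin, hτs, hτm⟩ := htree
  set X : Finset ℝ := Finset.image (fun s => (p s).1) Finset.univ with hX
  have hmem : ∀ s, (p s).1 ∈ X := fun s => Finset.mem_image_of_mem _ (Finset.mem_univ s)
  set e := X.orderIsoOfFin rfl with he
  set τ' : S → Fin X.card := fun s => e.symm ⟨(p s).1, hmem s⟩ with hτ'
  have hle : ∀ s s', τ' s ≤ τ' s' ↔ (p s).1 ≤ (p s').1 := fun s s' =>
    (e.symm.le_iff_le).trans Subtype.mk_le_mk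
  have hlt : ∀ s s', τ' s < τ' s' ↔ (p s).1 < (p s').1 := fun s s' =>
    (e.symm.lt_iff_lt).trans Subtype.mk_lt_mk
  have heq : ∀ s s', τ' s = τ' s' ↔ (p s).1 = (p s').1 := by
    intro s s'
    constructor
    · intro h
      exact congrArg Subtype.val (e.symm.injective h)
    · intro h
      simp only [hτ']
      congr 1
      exact Subtype.ext h
  have xeqτ : ∀ s s', τ s = τ s' → (p s).1 = (p s').1 := fun s s' h => Eset_xeq hlin hp' h
  set r' : S → S → Prop := fun s s' => toLex (p s) ≤ toLex (p s') with hr'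
  have hlexle : ∀ s s', r' s s' ↔
      ((p s).1 < (p s').1 ∨ ((p s).1 = (p s').1 ∧ (p s).2 ≤ (p s').2)) := fun s s' =>
    Prod.Lex.le_iff
  have hlin' : IsLinearOrder S r' :=
    { refl := fun s => le_refl _
      trans := fun a b c hab hbc => le_trans hab hbc
      antisymm := fun a b hab hba => hinj (toLex.injective (le_antisymm hab hba))
      total := fun a b => le_total _ _ }
  refine ⟨X.card, r', τ', ⟨hlin', ?_, ?_⟩, ⟨?_, ?_⟩, ?_, hinj, ?_, ?_⟩
  · -- surjectivity of τ'
    intro c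
    have hc : (e c : ℝ) ∈ X := (e c).2
    have hc' : (e c : ℝ) ∈ Finset.image (fun s => (p s).1) Finset.univ := by
      rw [← hX]; exact hc
    obtain ⟨s, _, hs⟩ := Finset.mem_image.1 hc'
    refine ⟨s, ?_⟩
    simp only [hτ']
    rw [show (⟨(p s).1, hmem s⟩ : {x // x ∈ X}) = e c from Subtype.ext hs]
    exact e.symm_apply_apply c
  · -- monotone wrt r'
    intro s s' hr
    rcases (hlexle s s').1 hr with h | ⟨h, _⟩
    · exact (hle s s').2 h.le
    · exact (hle s s').2 h.le
  · -- MemDtree (B)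
    intro s s' hne hnest
    exact (hlt s s').2 (hiii s s' hne hnest)
  · -- MemDtree (C)
    intro s s' hττ hr hne i j hi hj
    have hxeq : (p s).1 = (p s').1 := (heq s s').1 hττ
    rcases sigma_trichotomy σ hσs s s' hne with hAB | hAB | hN | hN
    · exact hAB i j hi hj
    · exfalso
      have hy : (p s').2 < (p s).2 := hiv s' s hne.symm hxeq.symm hAB
      rcases (hlexle s s').1 hr with h | ⟨_, h⟩
      · exact absurd hxeq (ne_of_lt h)
      · exact absurd hy (not_lt.2 h)
    · exact absurd hxeq (ne_of_lt (hiii s s' hne hN))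
    · exact absurd hxeq.symm (ne_of_lt (hiii s' s hne.symm hN))
  · -- TreeMorphism
    refine ⟨fun c => τ' ((hτs c).choose), ?_, ?_, ?_⟩
    · intro c c' hcc
      have h1 : τ ((hτs c).choose) = c := (hτs c).choose_spec
      have h2 : τ ((hτs c').choose) = c' := (hτs c').choose_spec
      rcases hcc.lt_or_eq with hlt' | heq'
      · have hττ : τ ((hτs c).choose) < τ ((hτs c').choose) := by rw [h1, h2]; exact hlt'
        exact (hle _ _).2 (hi _ _ hττ)
      · have hττ : τ ((hτs c).choose) = τ ((hτs c').choose) := by rw [h1, h2, heq']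
        exact ((heq _ _).2 (xeqτ _ _ hττ)).le
    · intro s
      have h1 : τ ((hτs (τ s)).choose) = τ s := (hτs (τ s)).choose_spec
      exact (heq _ _).2 (xeqτ _ _ h1.symm)
    · intro s s' hττ hr hne
      have h := hii s s' hττ hr hne
      exact (hlexle s s').2 (Or.inr ⟨h.1, h.2.le⟩)
  · -- FNcell (i)
    intro s s' h
    exact (hlt s s').1 h
  · -- FNcell (ii)
    intro s s' hττ hr hne
    have hxeq := (heq s s').1 hττ
    refine ⟨hxeq, ?_⟩
    rcases (hlexle s s').1 hr with h | ⟨_, h⟩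
    · exact absurd hxeq (ne_of_lt h)
    · rcases h.lt_or_eq with h | h
      · exact h
      · exact absurd (hinj (Prod.ext hxeq h)) hne

end StatementSevenLemmas

section StatementSevenLemmas2

variable {S : Type*} {n k : ℕ} {r : S → S → Prop} {τ : S → Fin n} {σ : Fin k → S}

lemma Eset_nonempty [Fintype S] (htree : IsPruned2Tree r τ)
    (hσs : Function.Surjective σ) (hτσ : MemDtree r τ σ) : (Eset r τ σ).Nonempty := by
  classical
  obtain ⟨hlin, hτs, hτm⟩ := htree
  set rk : S → ℕ := fun s => (Finset.univ.filter (fun t => r t s ∧ t ≠ s)).card with hrkdef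
  have hrk : ∀ s s', r s s' → s ≠ s' → rk s < rk s' := by
    intro s s' hr hne
    apply Finset.card_lt_card
    have hsub : (Finset.univ.filter (fun t => r t s ∧ t ≠ s)) ⊆
        (Finset.univ.filter (fun t => r t s' ∧ t ≠ s')) := by
      intro t ht
      simp only [Finset.mem_filter, Finset.mem_univ, true_and] at ht ⊢
      refine ⟨hlin.trans _ _ _ ht.1 hr, ?_⟩
      intro hts'
      subst hts'
      exact hne (hlin.antisymm _ _ hr ht.1)
    refine (Finset.ssubset_iff_of_subset hsub).2 ⟨s, ?_, ?_⟩
    · simp only [Finset.mem_filter, Finset.mem_univ, true_and]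
      exact ⟨hr, hne⟩
    · simp only [Finset.mem_filter, Finset.mem_univ, true_and]
      intro hcon
      exact hcon.2 rfl
  set p : S → ℝ × ℝ := fun s => (((τ s : ℕ) : ℝ), ((rk s : ℕ) : ℝ)) with hpdef
  have hx1 : ∀ s, (p s).1 = ((τ s : ℕ) : ℝ) := fun s => rfl
  have hx2 : ∀ s, (p s).2 = ((rk s : ℕ) : ℝ) := fun s => rfl
  have hτeqx : ∀ s s', (p s).1 = (p s').1 ↔ τ s = τ s' := by
    intro s s'
    rw [hx1, hx1]
    constructor
    · intro h
      exact Fin.ext (Nat.cast_injective h)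
    · intro h
      rw [h]
  refine ⟨p, ?_, ?_, ?_, ?_, ?_⟩
  · intro s s' h
    by_contra hne
    have h1 : (p s).1 = (p s').1 := congrArg Prod.fst h
    have h2 : (p s).2 = (p s').2 := congrArg Prod.snd h
    have hττ : τ s = τ s' := (hτeqx s s').1 h1
    have hrkeq : rk s = rk s' := by
      have := h2
      rw [hx2, hx2] at this
      exact_mod_cast this
    rcases hlin.total s s' with hr | hr
    · exact absurd hrkeq (ne_of_lt (hrk s s' hr hne))
    · exact absurd hrkeq.symm (ne_of_lt (hrk s' s hr (Ne.symm hne)))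
  · intro s s' h
    rw [hx1, hx1]
    have : (τ s : ℕ) ≤ (τ s' : ℕ) := h.le
    exact_mod_cast this
  · intro s s' hττ hr hne
    refine ⟨(hτeqx s s').2 hττ, ?_⟩
    rw [hx2, hx2]
    exact_mod_cast hrk s s' hr hne
  · intro s s' hne hnest
    have h := hτσ.1 s s' hne hnest
    rw [hx1, hx1]
    have : (τ s : ℕ) < (τ s' : ℕ) := h
    exact_mod_cast this
  · intro s s' hne hxeq hAB
    have hττ := (hτeqx s s').1 hxeq
    have hr : r s s' := by
      rcases hlin.total s s' with h | h
      · exact h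
      · exfalso
        obtain ⟨i, hi⟩ := hσs s
        obtain ⟨j, hj⟩ := hσs s'
        exact absurd (hAB i j hi hj) (not_lt.2 (hτσ.2 s' s hττ.symm h hne.symm j i hj hi).le)
    rw [hx2, hx2]
    exact_mod_cast hrk s s' hr hne

lemma Eset_convex (hlin : IsLinearOrder S r) (hσs : Function.Surjective σ) :
    Convex ℝ (Eset r τ σ) := by
  intro p hp q hq a b ha hb hab
  set c := a • p + b • q with hc
  have hc1 : ∀ s, (c s).1 = a * (p s).1 + b * (q s).1 := fun s => by
    simp [hc, Prod.smul_fst, smul_eq_mul]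
  have hc2 : ∀ s, (c s).2 = a * (p s).2 + b * (q s).2 := fun s => by
    simp [hc, Prod.smul_snd, smul_eq_mul]
  have keyx : ∀ s s', τ s ≤ τ s' → (c s).1 = (c s').1 →
      (a = 0 ∨ (p s).1 = (p s').1) ∧ (b = 0 ∨ (q s).1 = (q s').1) := by
    intro s s' hττ hxc
    have hpu : (p s).1 ≤ (p s').1 := Eset_xle hlin hp hττ
    have hqu : (q s).1 ≤ (q s').1 := Eset_xle hlin hq hττ
    rw [hc1, hc1] at hxc
    have h0 : a * ((p s).1 - (p s').1) + b * ((q s).1 - (q s').1) = 0 := by ring_nf; linarith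
    obtain ⟨h1, h2⟩ := comb_zero' ha hb (by linarith) (by linarith) h0
    constructor
    · rcases mul_eq_zero.1 h1 with h | h
      · exact Or.inl h
      · exact Or.inr (by linarith)
    · rcases mul_eq_zero.1 h2 with h | h
      · exact Or.inl h
      · exact Or.inr (by linarith)
  refine ⟨?_, ?_, ?_, ?_, ?_⟩
  · -- injectivity
    have main : ∀ s s', s ≠ s' → τ s ≤ τ s' → c s ≠ c s' := by
      intro s s' hne hττ hcc
      have hx : (c s).1 = (c s').1 := congrArg Prod.fst hcc
      have hy : (c s).2 = (c s').2 := congrArg Prod.snd hcc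
      obtain ⟨h1, h2⟩ := keyx s s' hττ hx
      rcases sigma_trichotomy σ hσs s s' hne with hAB | hAB | hN | hN
      · refine absurd hy (ne_of_lt ?_)
        rw [hc2, hc2]
        refine comb_lt' ha hb hab ?_ ?_
        · rcases h1 with h | h
          · exact Or.inl h
          · exact Or.inr (hp.2.2.2.2 s s' hne h hAB)
        · rcases h2 with h | h
          · exact Or.inl h
          · exact Or.inr (hq.2.2.2.2 s s' hne h hAB)
      · refine absurd hy.symm (ne_of_lt ?_)
        rw [hc2, hc2]
        refine comb_lt' ha hb hab ?_ ?_
        · rcases h1 with h | h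
          · exact Or.inl h
          · exact Or.inr (hp.2.2.2.2 s' s hne.symm h.symm hAB)
        · rcases h2 with h | h
          · exact Or.inl h
          · exact Or.inr (hq.2.2.2.2 s' s hne.symm h.symm hAB)
      · refine absurd hx (ne_of_lt ?_)
        rw [hc1, hc1]
        exact comb_lt' ha hb hab (Or.inr (hp.2.2.2.1 s s' hne hN))
          (Or.inr (hq.2.2.2.1 s s' hne hN))
      · refine absurd hx.symm (ne_of_lt ?_)
        rw [hc1, hc1]
        exact comb_lt' ha hb hab (Or.inr (hp.2.2.2.1 s' s hne.symm hN))
          (Or.inr (hq.2.2.2.1 s' s hne.symm hN))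
    intro s s' hcc
    by_contra hne
    rcases le_total (τ s) (τ s') with h | h
    · exact main s s' hne h hcc
    · exact main s' s (Ne.symm hne) h hcc.symm
  · intro s s' h
    rw [hc1, hc1]
    exact comb_le' ha hb (hp.2.1 s s' h) (hq.2.1 s s' h)
  · intro s s' hττ hr hne
    have hpe := hp.2.2.1 s s' hττ hr hne
    have hqe := hq.2.2.1 s s' hττ hr hne
    constructor
    · rw [hc1, hc1, hpe.1, hqe.1]
    · rw [hc2, hc2]
      exact comb_lt' ha hb hab (Or.inr hpe.2) (Or.inr hqe.2)
  · intro s s' hne hN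
    rw [hc1, hc1]
    exact comb_lt' ha hb hab (Or.inr (hp.2.2.2.1 s s' hne hN))
      (Or.inr (hq.2.2.2.1 s s' hne hN))
  · intro s s' hne hxc hAB
    rw [hc2, hc2]
    rcases le_total (τ s) (τ s') with hττ | hττ
    · obtain ⟨h1, h2⟩ := keyx s s' hττ hxc
      refine comb_lt' ha hb hab ?_ ?_
      · rcases h1 with h | h
        · exact Or.inl h
        · exact Or.inr (hp.2.2.2.2 s s' hne h hAB)
      · rcases h2 with h | h
        · exact Or.inl h
        · exact Or.inr (hq.2.2.2.2 s s' hne h hAB)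
    · obtain ⟨h1, h2⟩ := keyx s' s hττ hxc.symm
      refine comb_lt' ha hb hab ?_ ?_
      · rcases h1 with h | h
        · exact Or.inl h
        · exact Or.inr (hp.2.2.2.2 s s' hne h.symm hAB)
      · rcases h2 with h | h
        · exact Or.inl h
        · exact Or.inr (hq.2.2.2.2 s s' hne h.symm hAB)

end StatementSevenLemmas2

/-- For `σ ∈ D(S, N)` and a pruned 2-tree `(r, τ)` with
`σ ∈ D(τ, N)`, the space `Φ_σ(τ)` is contractible. -/
theorem statement7 {S : Type*} [Fintype S] (N k : ℕ)
    (hk : k = N + Fintype.card S) {n : ℕ} (r : S → S → Prop) (τ : S → Fin n)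
    (htree : IsPruned2Tree r τ) (σ : Fin k → S) (hσ : MemD σ)
    (hτσ : MemDtree r τ σ) :
    ContractibleSpace ↥(Phi r τ σ) := by
  have hEq : Phi r τ σ = Eset r τ σ :=
    Set.Subset.antisymm (phi_subset_Eset hσ.1) (Eset_subset_phi htree hσ.1)
  rw [hEq]
  exact (Eset_convex htree.1 hσ.1).contractibleSpace (Eset_nonempty htree hσ.1 hτσ)
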